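/- Let 1<p,q<∞, 0<α<n, and let w be a nonnegative weight on ℝ^n with Muckenhoupt characteristic A_{p,q}(w) = sup over cubes Q of (avg_Q w^q)^{1/q}(avg_Q w^{−p'})^{1/p'} finite, where 1/p − 1/q = α/n. Then the reverse doubling exponent of the measure w^q dx satisfies 1/δ(w^q) ≤ C_{p,q,n} A_{p,q}(w)^q; more precisely, for all cubes Q, |Q|_{w^q} / |3Q|_{w^q} ≤ 1 − 3^{−n(1+q/p')} A_{p,q}(w)^{−q}. -/

import Mathlib

open MeasureTheory ENNReal Set

noncomputable section

/-- The axis-parallel cube in `ℝ^n` with center `c` and side length `s`. -/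
def cube (n : ℕ) (c : Fin n → ℝ) (s : ℝ) : Set (Fin n → ℝ) :=
  {x | ∀ i, |x i - c i| ≤ s / 2}

lemma cube_eq_pi (n : ℕ) (c : Fin n → ℝ) (s : ℝ) :
    cube n c s = Set.pi Set.univ (fun i => Icc (c i - s / 2) (c i + s / 2)) := by
  ext x
  simp only [cube, mem_setOf_eq, Set.mem_pi, mem_univ, true_implies, mem_Icc, abs_le]
  constructor <;> intro h i <;> obtain ⟨h1, h2⟩ := h i <;> constructor <;> linarith

lemma measurableSet_cube (n : ℕ) (c : Fin n → ℝ) (s : ℝ) : MeasurableSet (cube n c s) := by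
  rw [cube_eq_pi]; exact MeasurableSet.univ_pi fun i => measurableSet_Icc

lemma volume_cube (n : ℕ) (c : Fin n → ℝ) {s : ℝ} (hs : 0 ≤ s) :
    volume (cube n c s) = ENNReal.ofReal (s ^ n) := by
  rw [cube_eq_pi, volume_pi_pi]
  have h : ∀ i : Fin n, volume (Icc (c i - s / 2) (c i + s / 2)) = ENNReal.ofReal s := by
    intro i; rw [Real.volume_Icc]; congr 1; ring
  simp only [h, Finset.prod_const, Finset.card_univ, Fintype.card_fin]
  rw [← ENNReal.ofReal_pow hs]

lemma hyperplane_null (n : ℕ) (i0 : Fin n) (b : ℝ) :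
    volume {x : Fin n → ℝ | x i0 = b} = 0 := by
  have h : {x : Fin n → ℝ | x i0 = b} =
      Set.pi Set.univ (fun j => if j = i0 then ({b} : Set ℝ) else Set.univ) := by
    ext x
    simp only [mem_setOf_eq, Set.mem_pi, mem_univ, true_implies]
    constructor
    · intro hx j
      split_ifs with hj
      · simp [hj, hx]
      · trivial
    · intro hx
      have := hx i0
      simpa using this
  rw [h, volume_pi_pi]
  apply Finset.prod_eq_zero (Finset.mem_univ i0)
  simp

set_option maxHeartbeats 2000000 in
/-- **Quantitative reverse doubling of `w^q` from the `A_{p,q}` condition.**  Let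
`1 < p, q < ∞`, `0 < α < n` with `1/p − 1/q = α/n`, and let `w` be a positive finite
measurable weight on `ℝ^n` whose Muckenhoupt characteristic is at most `A`, i.e. for every
cube `Q`, `(avg_Q w^q)^{1/q} (avg_Q w^{−p'})^{1/p'} ≤ A`.  Then for every cube `Q`,
`|Q|_{w^q} ≤ (1 − 3^{−n(1+q/p')} A^{−q}) |3Q|_{w^q}`. -/
theorem reverse_doubling_from_Apq (n : ℕ) (hn : 0 < n) (p q α A : ℝ)
    (hp : 1 < p) (hq : 1 < q) (hα : 0 < α) (hαn : α < n)
    (hbal : 1 / p - 1 / q = α / (n : ℝ)) (hA : 0 < A)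
    (w : (Fin n → ℝ) → ℝ≥0∞) (hwm : Measurable w) (hw : ∀ x, 0 < w x ∧ w x < ∞)
    (hchar : ∀ (c : Fin n → ℝ) (s : ℝ), 0 < s →
      ((ENNReal.ofReal (s ^ n))⁻¹ * ∫⁻ x in cube n c s, w x ^ q) ^ (1 / q) *
          ((ENNReal.ofReal (s ^ n))⁻¹ * ∫⁻ x in cube n c s, w x ^ (-(p / (p - 1)))) ^ (1 - 1 / p)
        ≤ ENNReal.ofReal A) :
    ∀ (c : Fin n → ℝ) (s : ℝ), 0 < s →
      (∫⁻ x in cube n c s, w x ^ q)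
        ≤ ENNReal.ofReal (1 - 3 ^ (-((n : ℝ) * (1 + q / (p / (p - 1))))) * A ^ (-q)) *
            ∫⁻ x in cube n c (3 * s), w x ^ q := by
  intro c s hs
  -- real exponent bookkeeping
  set p' : ℝ := p / (p - 1) with hp'def
  have hq0 : (0:ℝ) < q := by linarith
  have hp1 : (0:ℝ) < p - 1 := by linarith
  have hp'0 : 0 < p' := div_pos (by linarith) hp1
  have hpp' : 1 - 1 / p = 1 / p' := by rw [hp'def]; field_simp
  set u : ℝ := 1 + q / p' with hudef
  set u' : ℝ := 1 + p' / q with hu'def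
  have hu1 : 1 < u := by rw [hudef]; nlinarith [div_pos hq0 hp'0]
  have hu0 : 0 < u := by linarith
  have hu'1 : 1 < u' := by rw [hu'def]; nlinarith [div_pos hp'0 hq0]
  have hu'0 : 0 < u' := by linarith
  have hconj : Real.HolderConjugate u u' := by
    refine Real.holderConjugate_iff.mpr ⟨hu1, ?_⟩
    rw [hudef, hu'def]
    field_simp
    ring
  set a : ℝ := q / u with hadef
  have ha0 : 0 < a := div_pos hq0 hu0
  have hau : a * u = q := div_mul_cancel₀ q hu0.ne'
  have hau' : a * u' = p' := by
    rw [hadef, hudef, hu'def]; field_simp; ring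
  have h1u'u : 1 / u' * u = q / p' := by
    rw [hudef, hu'def]; field_simp; ring
  have hqp'0 : (0:ℝ) ≤ q / p' := (div_pos hq0 hp'0).le
  -- nonvanishing of the integrands
  have hwq_ne : ∀ x, w x ^ q ≠ 0 := fun x => by
    simp [ENNReal.rpow_eq_zero_iff, (hw x).1.ne', (hw x).2.ne]
  have hwp_ne : ∀ x, w x ^ (-p') ≠ 0 := fun x => by
    simp [ENNReal.rpow_eq_zero_iff, (hw x).1.ne', (hw x).2.ne]
  have int_ne_zero : ∀ (r : ℝ) (S : Set (Fin n → ℝ)), (∀ x, w x ^ r ≠ 0) →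
      volume S ≠ 0 → (∫⁻ x in S, w x ^ r) ≠ 0 := by
    intro r S hne hS h0
    rw [lintegral_eq_zero_iff (hwm.pow measurable_const)] at h0
    rw [Filter.EventuallyEq, ae_iff] at h0
    simp only [Pi.zero_apply] at h0
    have he : {x | ¬ w x ^ r = 0} = Set.univ := by
      ext x; simp only [mem_setOf_eq, mem_univ, iff_true]; exact hne x
    rw [he, Measure.restrict_apply_univ] at h0
    exact hS h0
  have cubevol_ne : ∀ (c' : Fin n → ℝ) (t : ℝ), 0 < t → volume (cube n c' t) ≠ 0 := by
    intro c' t ht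
    rw [volume_cube n c' ht.le]
    simp [ENNReal.ofReal_eq_zero, not_le, pow_pos ht]
  -- finiteness of ∫ w^q over cubes, from the characteristic bound
  have fin : ∀ (c' : Fin n → ℝ) (t : ℝ), 0 < t → (∫⁻ x in cube n c' t, w x ^ q) ≠ ⊤ := by
    intro c' t ht htop
    have hchar' := hchar c' t ht
    rw [hpp'] at hchar'
    set T : ℝ≥0∞ := ENNReal.ofReal (t ^ n) with hT
    have hTtop : T ≠ ⊤ := ofReal_ne_top
    have hT0 : T ≠ 0 := by
      rw [hT]; simp [ENNReal.ofReal_eq_zero, not_le, pow_pos ht]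
    have hTinv0 : T⁻¹ ≠ 0 := ENNReal.inv_ne_zero.mpr hTtop
    have h1 : (T⁻¹ * ∫⁻ x in cube n c' t, w x ^ q) ^ (1/q) = ⊤ := by
      rw [htop, ENNReal.mul_top hTinv0]
      exact ENNReal.top_rpow_of_pos (by positivity)
    have h2 : (T⁻¹ * ∫⁻ x in cube n c' t, w x ^ (-p')) ^ (1/p') ≠ 0 := by
      rw [ne_eq, ENNReal.rpow_eq_zero_iff]
      push_neg
      constructor
      · intro hc; exact absurd hc (mul_ne_zero hTinv0
          (int_ne_zero _ _ hwp_ne (cubevol_ne c' t ht)))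
      · intro _; positivity
    rw [h1, ENNReal.top_mul h2] at hchar'
    exact (lt_irrefl ⊤ (lt_of_le_of_lt hchar' ofReal_lt_top)).elim
  -- KEY: for any cube Q of side t and measurable E ⊆ Q:
  have main : ∀ (c' : Fin n → ℝ) (t : ℝ), 0 < t → ∀ E : Set (Fin n → ℝ), MeasurableSet E →
      E ⊆ cube n c' t →
      (∫⁻ x in cube n c' t, w x ^ q) * (volume E) ^ u ≤
        (ENNReal.ofReal A) ^ q * (ENNReal.ofReal (t ^ n)) ^ u * ∫⁻ x in E, w x ^ q := by
    intro c' t ht E hE hEQ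
    have hchar' := hchar c' t ht
    rw [hpp'] at hchar'
    set T : ℝ≥0∞ := ENNReal.ofReal (t ^ n) with hT
    have hTtop : T ≠ ⊤ := ofReal_ne_top
    have hT0 : T ≠ 0 := by
      rw [hT]; simp [ENNReal.ofReal_eq_zero, not_le, pow_pos ht]
    set Iq : ℝ≥0∞ := ∫⁻ x in cube n c' t, w x ^ q with hIqdef
    set Ip : ℝ≥0∞ := ∫⁻ x in cube n c' t, w x ^ (-p') with hIpdef
    set IqE : ℝ≥0∞ := ∫⁻ x in E, w x ^ q with hIqEdef
    -- Hölder on E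
    have holder : volume E ≤ IqE ^ (1/u) * Ip ^ (1/u') := by
      have step : volume E ≤ (∫⁻ x in E, ((fun x => w x ^ a) x) ^ u) ^ (1/u) *
          (∫⁻ x in E, ((fun x => w x ^ (-a)) x) ^ u') ^ (1/u') := by
        calc volume E = ∫⁻ _ in E, (1:ℝ≥0∞) := (setLIntegral_one E).symm
          _ = ∫⁻ x in E, ((fun x => w x ^ a) * (fun x => w x ^ (-a))) x := by
              refine lintegral_congr fun x => ?_
              simp only [Pi.mul_apply]
              rw [← ENNReal.rpow_add a (-a) (hw x).1.ne' (hw x).2.ne, add_neg_cancel,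
                ENNReal.rpow_zero]
          _ ≤ _ := ENNReal.lintegral_mul_le_Lp_mul_Lq _ hconj
              ((hwm.pow measurable_const).aemeasurable)
              ((hwm.pow measurable_const).aemeasurable)
      simp only [← ENNReal.rpow_mul, hau] at step
      have hnegau' : -a * u' = -p' := by rw [neg_mul, hau']
      rw [hnegau'] at step
      refine step.trans ?_
      exact mul_le_mul_right (ENNReal.rpow_le_rpow (lintegral_mono_set hEQ)
        (one_div_nonneg.mpr hu'0.le)) _
    have h2 : (volume E) ^ u ≤ IqE * Ip ^ (q/p') := by
      calc (volume E) ^ u ≤ (IqE ^ (1/u) * Ip ^ (1/u')) ^ u :=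
            ENNReal.rpow_le_rpow holder hu0.le
        _ = IqE * Ip ^ (q/p') := by
            rw [ENNReal.mul_rpow_of_nonneg _ _ hu0.le, ← ENNReal.rpow_mul,
              ← ENNReal.rpow_mul, one_div_mul_cancel hu0.ne', h1u'u, ENNReal.rpow_one]
    -- characteristic bound, raised to the power q
    have h4 : (T⁻¹ * Iq) * (T⁻¹ * Ip) ^ (q/p') ≤ (ENNReal.ofReal A) ^ q := by
      have h4' : ((T⁻¹ * Iq) ^ (1/q) * (T⁻¹ * Ip) ^ (1/p')) ^ q ≤ (ENNReal.ofReal A) ^ q :=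
        ENNReal.rpow_le_rpow hchar' hq0.le
      rw [ENNReal.mul_rpow_of_nonneg _ _ hq0.le, ← ENNReal.rpow_mul, ← ENNReal.rpow_mul,
        one_div_mul_cancel hq0.ne', ENNReal.rpow_one] at h4'
      have hpq : 1 / p' * q = q / p' := by field_simp
      rwa [hpq] at h4'
    have hTT : T * T⁻¹ = 1 := ENNReal.mul_inv_cancel hT0 hTtop
    have hTT2 : T ^ (q/p') * (T⁻¹) ^ (q/p') = 1 := by
      rw [← ENNReal.mul_rpow_of_nonneg _ _ hqp'0, hTT, ENNReal.one_rpow]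
    have hTu : T ^ u = T * T ^ (q/p') := by
      rw [hudef, ENNReal.rpow_add 1 (q/p') hT0 hTtop, ENNReal.rpow_one]
    have h3 : Iq * Ip ^ (q/p') ≤ (ENNReal.ofReal A) ^ q * T ^ u := by
      calc Iq * Ip ^ (q/p')
          = (T * T⁻¹) * (T ^ (q/p') * (T⁻¹) ^ (q/p')) * (Iq * Ip ^ (q/p')) := by
            rw [hTT, hTT2]; ring
        _ = (T * T ^ (q/p')) * ((T⁻¹ * Iq) * ((T⁻¹) ^ (q/p') * Ip ^ (q/p'))) := by ring
        _ = (T * T ^ (q/p')) * ((T⁻¹ * Iq) * (T⁻¹ * Ip) ^ (q/p')) := by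
            rw [← ENNReal.mul_rpow_of_nonneg _ _ hqp'0]
        _ ≤ (T * T ^ (q/p')) * (ENNReal.ofReal A) ^ q := mul_le_mul_right h4 _
        _ = (ENNReal.ofReal A) ^ q * T ^ u := by rw [hTu]; ring
    calc Iq * (volume E) ^ u ≤ Iq * (IqE * Ip ^ (q/p')) := mul_le_mul_right h2 _
      _ = (Iq * Ip ^ (q/p')) * IqE := by ring
      _ ≤ ((ENNReal.ofReal A) ^ q * T ^ u) * IqE := mul_le_mul_left h3 _
      _ = (ENNReal.ofReal A) ^ q * T ^ u * IqE := by ring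
  
  -- A ≥ 1
  have hA1 : 1 ≤ A := by
    by_contra hlt
    push_neg at hlt
    have h := main (fun _ => 0) 1 one_pos (cube n (fun _ => 0) 1)
      (measurableSet_cube n _ 1) subset_rfl
    rw [volume_cube n _ zero_le_one, one_pow, ENNReal.ofReal_one, ENNReal.one_rpow,
      mul_one, mul_one] at h
    have hI0 : (∫⁻ x in cube n (fun _ => 0) 1, w x ^ q) ≠ 0 :=
      int_ne_zero q _ hwq_ne (cubevol_ne _ 1 one_pos)
    have hItop := fin (fun _ => 0) 1 one_pos
    have hAq1 : (ENNReal.ofReal A) ^ q < 1 := by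
      rw [ENNReal.ofReal_rpow_of_pos hA]
      exact ENNReal.ofReal_lt_one.mpr (Real.rpow_lt_one hA.le hlt hq0)
    have hcontr := (ENNReal.mul_lt_mul_iff_left hI0 hItop).mpr hAq1
    rw [one_mul] at hcontr
    exact absurd (h.trans_lt hcontr) (lt_irrefl _)
  -- geometry
  set i0 : Fin n := ⟨0, hn⟩ with hi0
  set c' : Fin n → ℝ := Function.update c i0 (c i0 + s) with hc'
  have hmQ1 : MeasurableSet (cube n c s) := measurableSet_cube n c s
  have hmE : MeasurableSet (cube n c' s) := measurableSet_cube n c' s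
  have hQ13 : cube n c s ⊆ cube n c (3 * s) := by
    intro x hx
    simp only [cube, mem_setOf_eq, abs_le] at hx ⊢
    intro i
    obtain ⟨h1, h2⟩ := hx i
    constructor <;> linarith
  have hEQ3 : cube n c' s ⊆ cube n c (3 * s) := by
    intro x hx
    simp only [cube, mem_setOf_eq, abs_le] at hx ⊢
    intro i
    obtain ⟨h1, h2⟩ := hx i
    rw [hc', Function.update_apply] at h1 h2
    split_ifs at h1 h2 with hi
    · rw [hi] at h1 h2; rw [hi]; constructor <;> linarith
    · constructor <;> linarith
  have hnull : volume (cube n c' s ∩ cube n c s) = 0 := by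
    refine measure_mono_null ?_ (hyperplane_null n i0 (c i0 + s / 2))
    rintro x ⟨hxE, hxQ⟩
    simp only [cube, mem_setOf_eq, abs_le] at hxE hxQ
    obtain ⟨h1, _⟩ := hxE i0
    obtain ⟨_, h2⟩ := hxQ i0
    rw [hc', Function.update_self] at h1
    simp only [mem_setOf_eq]
    linarith
  -- splitting of integrals
  have hIqE_split : (∫⁻ x in cube n c' s, w x ^ q)
      = ∫⁻ x in cube n c' s \ cube n c s, w x ^ q := by
    have hd : Disjoint (cube n c' s \ cube n c s) (cube n c' s ∩ cube n c s) :=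
      disjoint_sdiff_self_left.mono_right inter_subset_right
    have h := lintegral_union (μ := volume) (f := fun x => w x ^ q) (hmE.inter hmQ1) hd
    rw [Set.diff_union_inter] at h
    rw [h, setLIntegral_measure_zero _ _ hnull, add_zero]
  have hsum : (∫⁻ x in cube n c s, w x ^ q) + (∫⁻ x in cube n c' s \ cube n c s, w x ^ q)
      ≤ ∫⁻ x in cube n c (3 * s), w x ^ q := by
    have h := lintegral_mono_set (μ := volume) (f := fun x => w x ^ q)
      (union_subset hQ13 ((Set.diff_subset (s := cube n c' s) (t := cube n c s)).trans hEQ3))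
    rwa [lintegral_union (hmE.diff hmQ1) disjoint_sdiff_self_right] at h
  -- the key inequality applied to the triple cube
  have hkey := main c (3 * s) (by linarith) (cube n c' s) hmE hEQ3
  rw [volume_cube n c' hs.le] at hkey
  have hsn0 : (0:ℝ) < s ^ n := pow_pos hs n
  have hV0 : (ENNReal.ofReal (s ^ n)) ^ u ≠ 0 := by
    simp only [ne_eq, ENNReal.rpow_eq_zero_iff, not_or, not_and]
    constructor
    · intro hc; exact absurd hc (by simp [ENNReal.ofReal_eq_zero, not_le, hsn0])
    · intro hc; exact absurd hc ofReal_ne_top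
  have hVtop : (ENNReal.ofReal (s ^ n)) ^ u ≠ ⊤ :=
    ENNReal.rpow_ne_top_of_nonneg hu0.le ofReal_ne_top
  rw [mul_pow, ENNReal.ofReal_mul (by positivity), ENNReal.mul_rpow_of_nonneg _ _ hu0.le] at hkey
  have hkey2 : (∫⁻ x in cube n c (3 * s), w x ^ q)
      ≤ (ENNReal.ofReal A) ^ q * (ENNReal.ofReal ((3:ℝ) ^ n)) ^ u * ∫⁻ x in cube n c' s, w x ^ q := by
    rw [← ENNReal.mul_le_mul_iff_left hV0 hVtop]
    calc (∫⁻ x in cube n c (3 * s), w x ^ q) * (ENNReal.ofReal (s ^ n)) ^ u ≤ _ := hkey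
      _ = ((ENNReal.ofReal A) ^ q * (ENNReal.ofReal ((3:ℝ) ^ n)) ^ u *
          ∫⁻ x in cube n c' s, w x ^ q) * (ENNReal.ofReal (s ^ n)) ^ u := by ring
  -- pass to real numbers
  set k : ℝ := A ^ q * 3 ^ ((n:ℝ) * u) with hkdef
  have hKofReal : (ENNReal.ofReal A) ^ q * (ENNReal.ofReal ((3:ℝ) ^ n)) ^ u
      = ENNReal.ofReal k := by
    have haux : ((3:ℝ) ^ n) ^ u = (3:ℝ) ^ ((n:ℝ) * u) := by
      rw [← Real.rpow_natCast (3:ℝ) n, ← Real.rpow_mul (by norm_num)]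
    rw [ENNReal.ofReal_rpow_of_pos hA, ENNReal.ofReal_rpow_of_pos (by positivity), haux,
      ← ENNReal.ofReal_mul (by positivity)]
  have hk1 : 1 ≤ k := by
    have h1 : (1:ℝ) ≤ A ^ q := by
      calc (1:ℝ) = 1 ^ q := (Real.one_rpow q).symm
        _ ≤ A ^ q := Real.rpow_le_rpow zero_le_one hA1 hq0.le
    have h2 : (1:ℝ) ≤ 3 ^ ((n:ℝ) * u) := by
      calc (1:ℝ) = 1 ^ ((n:ℝ) * u) := (Real.one_rpow _).symm
        _ ≤ _ := Real.rpow_le_rpow zero_le_one (by norm_num) (by positivity)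
    nlinarith
  have hk0 : (0:ℝ) < k := by positivity
  have hfin3 : (∫⁻ x in cube n c (3 * s), w x ^ q) ≠ ⊤ := fin c (3 * s) (by linarith)
  have hfin1 : (∫⁻ x in cube n c s, w x ^ q) ≠ ⊤ :=
    (lt_of_le_of_lt (lintegral_mono_set hQ13) (lt_top_iff_ne_top.mpr hfin3)).ne
  have hfinE' : (∫⁻ x in cube n c' s \ cube n c s, w x ^ q) ≠ ⊤ :=
    (lt_of_le_of_lt (lintegral_mono_set ((Set.diff_subset (s := cube n c' s) (t := cube n c s)).trans hEQ3))
      (lt_top_iff_ne_top.mpr hfin3)).ne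
  set x1 : ℝ := (∫⁻ x in cube n c s, w x ^ q).toReal with hx1def
  set x3 : ℝ := (∫⁻ x in cube n c (3 * s), w x ^ q).toReal with hx3def
  set e : ℝ := (∫⁻ x in cube n c' s \ cube n c s, w x ^ q).toReal with hedef
  have hsumR : x1 + e ≤ x3 := by
    have h := ENNReal.toReal_mono hfin3 hsum
    rwa [ENNReal.toReal_add hfin1 hfinE'] at h
  have hkeyR : x3 ≤ k * e := by
    have h := hkey2
    rw [hKofReal, hIqE_split] at h
    have h2 := ENNReal.toReal_mono (ENNReal.mul_ne_top ofReal_ne_top hfinE') h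
    rwa [ENNReal.toReal_mul, ENNReal.toReal_ofReal hk0.le] at h2
  have hinv : k * k⁻¹ = 1 := mul_inv_cancel₀ hk0.ne'
  have hkinv1 : k⁻¹ ≤ 1 := by nlinarith
  have hkinv0 : 0 < k⁻¹ := by positivity
  have hx1R : x1 ≤ (1 - k⁻¹) * x3 := by
    have h5 : k * x1 ≤ (k - 1) * x3 := by nlinarith
    have h6 : (k - 1) * x3 = k * ((1 - k⁻¹) * x3) := by
      field_simp
    rw [h6] at h5
    exact le_of_mul_le_mul_left h5 hk0
  have hEps : (3:ℝ) ^ (-((n:ℝ) * u)) * A ^ (-q) = k⁻¹ := by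
    rw [Real.rpow_neg (by norm_num : (0:ℝ) ≤ 3), Real.rpow_neg hA.le, hkdef, mul_inv]
    ring
  have hcoef : 0 ≤ 1 - (3:ℝ) ^ (-((n:ℝ) * u)) * A ^ (-q) := by rw [hEps]; linarith
  rw [← ENNReal.ofReal_toReal hfin1, ← ENNReal.ofReal_toReal hfin3, ← hx1def, ← hx3def,
    ← ENNReal.ofReal_mul hcoef]
  refine ENNReal.ofReal_le_ofReal ?_
  rw [hEps]
  exact hx1R

end
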